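/- Partial observability lower bound: under the setup above, for any affine predictor of X_f from X_h, the error covariance satisfies Cov(ε) ⪰ H B Σ Bᵀ Hᵀ + H A Cov(Z̃_h)(H A)ᵀ, assuming X_h, Z̃_h, and U are mutually uncorrelated with Cov(X_h) invertible. -/

import Mathlib

open MeasureTheory ProbabilityTheory Matrix

/-- Entrywise expectation of a random vector. -/
noncomputable def vExp {Ω : Type*} [MeasurableSpace Ω] {α : Type*} (P : Measure Ω)
    (X : Ω → α → ℝ) : α → ℝ :=
  fun i => ∫ ω, X ω i ∂P

/-- Cross-covariance matrix E[(X-EX)(Y-EY)ᵀ]. -/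
noncomputable def crossCov {Ω : Type*} [MeasurableSpace Ω] {α β : Type*} (P : Measure Ω)
    (X : Ω → α → ℝ) (Y : Ω → β → ℝ) : Matrix α β ℝ :=
  Matrix.of fun i j => ∫ ω, (X ω i - vExp P X i) * (Y ω j - vExp P Y j) ∂P

/-- Covariance matrix of a random vector. -/
noncomputable def vCov {Ω : Type*} [MeasurableSpace Ω] {α : Type*} (P : Measure Ω)
    (X : Ω → α → ℝ) : Matrix α α ℝ :=
  crossCov P X X

/-- Second-moment (uncentered) matrix E[X Yᵀ]. -/
noncomputable def secondMoment {Ω : Type*} [MeasurableSpace Ω] {α β : Type*} (P : Measure Ω)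
    (X : Ω → α → ℝ) (Y : Ω → β → ℝ) : Matrix α β ℝ :=
  Matrix.of fun i j => ∫ ω, X ω i * Y ω j ∂P

/-- Squared Euclidean norm of a vector. -/
noncomputable def sqNorm {α : Type*} [Fintype α] (v : α → ℝ) : ℝ :=
  ∑ i, (v i) ^ 2

set_option linter.unusedSectionVars false

section Aux

variable {Ω : Type*} [MeasurableSpace Ω] {P : Measure Ω} [IsProbabilityMeasure P]
variable {α β γ ι : Type*} [Fintype α] [Fintype β] [Fintype γ] [Fintype ι]

lemma intmul {f g : Ω → ℝ} (hf : MemLp f 2 P) (hg : MemLp g 2 P) :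
    Integrable (fun ω => f ω * g ω) P := by
  have h2 : (1 : ENNReal) / 1 = 1 / 2 + 1 / 2 := by
    simp only [one_div]
    rw [ENNReal.inv_two_add_inv_two, inv_one]

  have h : MemLp (f • g) 1 P :=
    haveI : ENNReal.HolderTriple 2 2 1 := ⟨by rw [ENNReal.inv_two_add_inv_two, inv_one]⟩
    hg.smul hf
  exact h.integrable le_rfl

lemma memLp_centered {X : Ω → α → ℝ} (hX : ∀ i, MemLp (fun ω => X ω i) 2 P) (i : α) :
    MemLp (fun ω => X ω i - vExp P X i) 2 P :=
  (hX i).sub (memLp_const _)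

lemma memLp_mulVec {X : Ω → α → ℝ} (hX : ∀ i, MemLp (fun ω => X ω i) 2 P)
    (M : Matrix ι α ℝ) (i : ι) : MemLp (fun ω => (M.mulVec (X ω)) i) 2 P := by
  simp only [Matrix.mulVec, dotProduct]
  exact memLp_finset_sum _ fun j _ => (hX j).const_mul _

lemma int_centered_mul {X : Ω → α → ℝ} {Y : Ω → β → ℝ}
    (hX : ∀ i, MemLp (fun ω => X ω i) 2 P) (hY : ∀ j, MemLp (fun ω => Y ω j) 2 P)
    (i : α) (j : β) :
    Integrable (fun ω => (X ω i - vExp P X i) * (Y ω j - vExp P Y j)) P :=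
  intmul (memLp_centered hX i) (memLp_centered hY j)

lemma vExp_add {X Y : Ω → α → ℝ} (hX : ∀ i, Integrable (fun ω => X ω i) P)
    (hY : ∀ i, Integrable (fun ω => Y ω i) P) :
    vExp P (fun ω => X ω + Y ω) = vExp P X + vExp P Y := by
  funext i
  simpa [vExp] using integral_add (hX i) (hY i)

lemma vExp_mulVec {X : Ω → α → ℝ} (hX : ∀ i, Integrable (fun ω => X ω i) P)
    (M : Matrix ι α ℝ) :
    vExp P (fun ω => M.mulVec (X ω)) = M.mulVec (vExp P X) := by
  funext i
  simp only [vExp, Matrix.mulVec, dotProduct]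
  rw [integral_finset_sum _ fun j _ => (hX j).const_mul _]
  simp [integral_const_mul]

lemma crossCov_comm {X : Ω → α → ℝ} {Y : Ω → β → ℝ} :
    crossCov P X Y = (crossCov P Y X)ᵀ := by
  ext i j
  simp [crossCov, mul_comm]

lemma crossCov_add_const_left {X : Ω → α → ℝ} {Y : Ω → β → ℝ}
    (hX : ∀ i, Integrable (fun ω => X ω i) P) (c : α → ℝ) :
    crossCov P (fun ω => X ω + c) Y = crossCov P X Y := by
  have hc : vExp P (fun _ : Ω => c) = c := by
    funext i
    simp [vExp]
  have hE : vExp P (fun ω => X ω + c) = vExp P X + c := by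
    rw [vExp_add (Y := fun _ => c) hX (fun i => integrable_const _), hc]
  ext i j
  simp only [crossCov, Matrix.of_apply, hE, Pi.add_apply]
  congr 1
  funext ω
  ring_nf

lemma crossCov_add_const_right {X : Ω → α → ℝ} {Y : Ω → β → ℝ}
    (hY : ∀ j, Integrable (fun ω => Y ω j) P) (c : β → ℝ) :
    crossCov P X (fun ω => Y ω + c) = crossCov P X Y := by
  rw [crossCov_comm, crossCov_add_const_left hY c, ← crossCov_comm]

lemma crossCov_add_left {X₁ X₂ : Ω → α → ℝ} {Y : Ω → β → ℝ}
    (h1 : ∀ i, MemLp (fun ω => X₁ ω i) 2 P) (h2 : ∀ i, MemLp (fun ω => X₂ ω i) 2 P)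
    (hY : ∀ j, MemLp (fun ω => Y ω j) 2 P) :
    crossCov P (fun ω => X₁ ω + X₂ ω) Y = crossCov P X₁ Y + crossCov P X₂ Y := by
  have hE : vExp P (fun ω => X₁ ω + X₂ ω) = vExp P X₁ + vExp P X₂ :=
    vExp_add (fun i => (h1 i).integrable one_le_two) (fun i => (h2 i).integrable one_le_two)
  ext i j
  simp only [crossCov, Matrix.add_apply, Matrix.of_apply, hE, Pi.add_apply]
  rw [← integral_add (int_centered_mul h1 hY i j) (int_centered_mul h2 hY i j)]
  congr 1
  funext ω
  ring

lemma crossCov_add_right {X : Ω → α → ℝ} {Y₁ Y₂ : Ω → β → ℝ}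
    (hX : ∀ i, MemLp (fun ω => X ω i) 2 P) (h1 : ∀ j, MemLp (fun ω => Y₁ ω j) 2 P)
    (h2 : ∀ j, MemLp (fun ω => Y₂ ω j) 2 P) :
    crossCov P X (fun ω => Y₁ ω + Y₂ ω) = crossCov P X Y₁ + crossCov P X Y₂ := by
  rw [crossCov_comm, crossCov_add_left h1 h2 hX, Matrix.transpose_add, ← crossCov_comm,
    ← crossCov_comm]

lemma crossCov_mulVec_left {X : Ω → α → ℝ} {Y : Ω → β → ℝ}
    (hX : ∀ i, MemLp (fun ω => X ω i) 2 P) (hY : ∀ j, MemLp (fun ω => Y ω j) 2 P)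
    (M : Matrix ι α ℝ) :
    crossCov P (fun ω => M.mulVec (X ω)) Y = M * crossCov P X Y := by
  have hE : vExp P (fun ω => M.mulVec (X ω)) = M.mulVec (vExp P X) :=
    vExp_mulVec (fun i => (hX i).integrable one_le_two) M
  ext i j
  simp only [crossCov, Matrix.mul_apply, Matrix.of_apply, hE]
  have key : ∀ ω, ((M.mulVec (X ω)) i - (M.mulVec (vExp P X)) i) * (Y ω j - vExp P Y j)
      = ∑ k, M i k * ((X ω k - vExp P X k) * (Y ω j - vExp P Y j)) := by
    intro ω
    simp only [Matrix.mulVec, dotProduct, ← Finset.sum_sub_distrib, ← mul_sub,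
      Finset.sum_mul, mul_assoc]
  simp only [key]
  rw [integral_finset_sum _ fun k _ => ((int_centered_mul hX hY k j).const_mul _)]
  simp [integral_const_mul]

lemma crossCov_mulVec_right {X : Ω → α → ℝ} {Y : Ω → β → ℝ}
    (hX : ∀ i, MemLp (fun ω => X ω i) 2 P) (hY : ∀ j, MemLp (fun ω => Y ω j) 2 P)
    (N : Matrix ι β ℝ) :
    crossCov P X (fun ω => N.mulVec (Y ω)) = crossCov P X Y * Nᵀ := by
  rw [crossCov_comm, crossCov_mulVec_left hY hX N, Matrix.transpose_mul, ← crossCov_comm]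

end Aux

lemma crossCov_self_add₃ {Ω : Type*} [MeasurableSpace Ω] {P : Measure Ω}
    [IsProbabilityMeasure P] {ι : Type*} [Fintype ι]
    {X Y W : Ω → ι → ℝ}
    (hX : ∀ i, MemLp (fun ω => X ω i) 2 P) (hY : ∀ i, MemLp (fun ω => Y ω i) 2 P)
    (hW : ∀ i, MemLp (fun ω => W ω i) 2 P) :
    crossCov P (fun ω => X ω + Y ω + W ω) (fun ω => X ω + Y ω + W ω) =
      crossCov P X X + crossCov P X Y + crossCov P X W +
      crossCov P Y X + crossCov P Y Y + crossCov P Y W +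
      crossCov P W X + crossCov P W Y + crossCov P W W := by
  have hXY : ∀ i, MemLp (fun ω => (fun ω => X ω + Y ω) ω i) 2 P :=
    fun i => (hX i).add (hY i)
  have hXYW : ∀ i, MemLp (fun ω => (fun ω => X ω + Y ω + W ω) ω i) 2 P :=
    fun i => (hXY i).add (hW i)
  rw [crossCov_add_left (X₁ := fun ω => X ω + Y ω) (X₂ := W) hXY hW hXYW,
    crossCov_add_left (X₁ := X) (X₂ := Y) (Y := fun ω => X ω + Y ω + W ω) hX hY hXYW,
    crossCov_add_right (X := X) (Y₁ := fun ω => X ω + Y ω) (Y₂ := W) hX hXY hW,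
    crossCov_add_right (X := X) (Y₁ := X) (Y₂ := Y) hX hX hY,
    crossCov_add_right (X := Y) (Y₁ := fun ω => X ω + Y ω) (Y₂ := W) hY hXY hW,
    crossCov_add_right (X := Y) (Y₁ := X) (Y₂ := Y) hY hX hY,
    crossCov_add_right (X := W) (Y₁ := fun ω => X ω + Y ω) (Y₂ := W) hW hXY hW,
    crossCov_add_right (X := W) (Y₁ := X) (Y₂ := Y) hW hX hY]
  abel

/-- Partial observability lower bound: under `Z_f = A Z_h + B U`,
`X = H Z` with `H H⁺ = I`, `Z_h = H⁺ X_h + Z̃_h`, and `X_h, Z̃_h, U` mutually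
uncorrelated with `Cov X_h` invertible, every affine predictor `C X_h + d` of
`X_f` has error covariance `⪰ H B Σ Bᵀ Hᵀ + H A Cov(Z̃_h) (H A)ᵀ`. -/
theorem stmt13 {Ω : Type*} [MeasurableSpace Ω] {n p m : ℕ} (hmn : m < n)
    (P : Measure Ω) [IsProbabilityMeasure P]
    (Zh : Ω → Fin n → ℝ) (U : Ω → Fin p → ℝ)
    (A : Matrix (Fin n) (Fin n) ℝ) (B : Matrix (Fin n) (Fin p) ℝ)
    (H : Matrix (Fin m) (Fin n) ℝ) (Hplus : Matrix (Fin n) (Fin m) ℝ)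
    (hHH : H * Hplus = 1)
    (μv : Fin p → ℝ) (Sig : Matrix (Fin p) (Fin p) ℝ)
    (hZhm : Measurable Zh) (hUm : Measurable U)
    (hZh2 : ∀ i, MemLp (fun ω => Zh ω i) 2 P)
    (hU2 : ∀ i, MemLp (fun ω => U ω i) 2 P)
    (hmean : vExp P U = μv) (hcov : vCov P U = Sig)
    (Zf : Ω → Fin n → ℝ) (hZf : ∀ ω, Zf ω = A.mulVec (Zh ω) + B.mulVec (U ω))
    (Xh : Ω → Fin m → ℝ) (hXh : ∀ ω, Xh ω = H.mulVec (Zh ω))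
    (Xf : Ω → Fin m → ℝ) (hXfdef : ∀ ω, Xf ω = H.mulVec (Zf ω))
    (Zt : Ω → Fin n → ℝ) (hZt : ∀ ω, Zt ω = Zh ω - Hplus.mulVec (Xh ω))
    (hZtmean : vExp P Zt = 0)
    (huncorr₁ : crossCov P Xh Zt = 0)
    (huncorr₂ : crossCov P Xh U = 0)
    (huncorr₃ : crossCov P Zt U = 0)
    (hposdef : (vCov P Xh).PosDef) :
    ∀ (C : Matrix (Fin m) (Fin m) ℝ) (d : Fin m → ℝ),
      (vCov P (fun ω => Xf ω - (C.mulVec (Xh ω) + d)) -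
        (H * B * Sig * Bᵀ * Hᵀ + (H * A) * vCov P Zt * (H * A)ᵀ)).PosSemidef := by
  intro C d
  have hXh2 : ∀ i, MemLp (fun ω => Xh ω i) 2 P := by
    intro i
    have h : (fun ω => Xh ω i) = fun ω => (H.mulVec (Zh ω)) i := by
      funext ω; rw [hXh]
    rw [h]; exact memLp_mulVec hZh2 H i
  have hZt2 : ∀ i, MemLp (fun ω => Zt ω i) 2 P := by
    intro i
    have h : (fun ω => Zt ω i) = fun ω => Zh ω i - (Hplus.mulVec (Xh ω)) i := by
      funext ω; rw [hZt]; rfl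
    rw [h]; exact (hZh2 i).sub (memLp_mulVec hXh2 Hplus i)
  set M := H * A * Hplus - C with hM
  set N := H * A with hN
  set K := H * B with hK
  set a : Ω → Fin m → ℝ := fun ω => M.mulVec (Xh ω) with ha
  set b : Ω → Fin m → ℝ := fun ω => N.mulVec (Zt ω) with hb
  set c : Ω → Fin m → ℝ := fun ω => K.mulVec (U ω) with hc
  have ha2 : ∀ i, MemLp (fun ω => a ω i) 2 P := memLp_mulVec hXh2 M
  have hb2 : ∀ i, MemLp (fun ω => b ω i) 2 P := memLp_mulVec hZt2 N
  have hc2 : ∀ i, MemLp (fun ω => c ω i) 2 P := memLp_mulVec hU2 K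
  have habc2 : ∀ i, MemLp (fun ω => (a ω + b ω + c ω) i) 2 P :=
    fun i => ((ha2 i).add (hb2 i)).add (hc2 i)
  have hfun : (fun ω => Xf ω - (C.mulVec (Xh ω) + d))
      = fun ω => (a ω + b ω + c ω) + (-d) := by
    funext ω
    have hzh : Zh ω = Hplus.mulVec (Xh ω) + Zt ω := by
      rw [hZt]; abel
    rw [hXfdef, hZf, hzh, ha, hb, hc, hM, hN, hK]
    simp only [Matrix.mulVec_add, Matrix.sub_mulVec, ← Matrix.mulVec_mulVec]
    abel
  rw [hfun]
  have hcovU : crossCov P U U = Sig := hcov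
  have hcc : ∀ {q r : ℕ} (X : Ω → Fin q → ℝ) (Y : Ω → Fin r → ℝ)
      (hX : ∀ i, MemLp (fun ω => X ω i) 2 P) (hY : ∀ j, MemLp (fun ω => Y ω j) 2 P)
      (M₁ : Matrix (Fin m) (Fin q) ℝ) (N₁ : Matrix (Fin m) (Fin r) ℝ),
      crossCov P (fun ω => M₁.mulVec (X ω)) (fun ω => N₁.mulVec (Y ω))
        = M₁ * crossCov P X Y * N₁ᵀ := by
    intro q r X Y hX hY M₁ N₁
    rw [crossCov_mulVec_left hX (memLp_mulVec hY N₁) M₁,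
      crossCov_mulVec_right hX hY N₁, Matrix.mul_assoc]
  have hZtXh : crossCov P Zt Xh = 0 := by
    rw [crossCov_comm, huncorr₁]; simp
  have hUXh : crossCov P U Xh = 0 := by
    rw [crossCov_comm, huncorr₂]; simp
  have hUZt : crossCov P U Zt = 0 := by
    rw [crossCov_comm, huncorr₃]; simp
  have hmain : vCov P (fun ω => (a ω + b ω + c ω) + (-d))
      = M * vCov P Xh * Mᵀ + N * vCov P Zt * Nᵀ + K * Sig * Kᵀ := by
    show crossCov P _ _ = _
    rw [crossCov_add_const_left (X := fun ω => a ω + b ω + c ω)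
        (Y := fun ω => (a ω + b ω + c ω) + (-d))
        (fun i => (habc2 i).integrable one_le_two) (-d),
      crossCov_add_const_right (X := fun ω => a ω + b ω + c ω)
        (Y := fun ω => a ω + b ω + c ω)
        (fun i => (habc2 i).integrable one_le_two) (-d),
      crossCov_self_add₃ ha2 hb2 hc2, ha, hb, hc,
      hcc Xh Xh hXh2 hXh2 M M, hcc Xh Zt hXh2 hZt2 M N, hcc Xh U hXh2 hU2 M K,
      hcc Zt Xh hZt2 hXh2 N M, hcc Zt Zt hZt2 hZt2 N N, hcc Zt U hZt2 hU2 N K,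
      hcc U Xh hU2 hXh2 K M, hcc U Zt hU2 hZt2 K N, hcc U U hU2 hU2 K K,
      huncorr₁, huncorr₂, huncorr₃, hZtXh, hUXh, hUZt, hcovU]
    simp only [Matrix.mul_zero, Matrix.zero_mul, add_zero, zero_add, vCov]
  rw [hmain]
  have hKS : K * Sig * Bᵀ * Hᵀ = K * Sig * Kᵀ := by
    rw [hK]
    simp only [Matrix.transpose_mul, Matrix.mul_assoc]
  have hdiff : M * vCov P Xh * Mᵀ + N * vCov P Zt * Nᵀ + K * Sig * Kᵀ -
      (K * Sig * Bᵀ * Hᵀ + N * vCov P Zt * Nᵀ) = M * vCov P Xh * Mᵀ := by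
    rw [hKS]; abel
  rw [hdiff]
  have h := hposdef.posSemidef.mul_mul_conjTranspose_same M
  rwa [Matrix.conjTranspose_eq_transpose_of_trivial] at h
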